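/- The function f produced by the merge tree algorithm is a discrete Morse function on the output graph in which every simplex is critical. -/

import Mathlib

/-- A chiral merge tree: a full binary tree where each node's first child is the
left (L) child and its second child is the right (R) child. -/
inductive CMT : Type
  | leaf : CMT
  | node : CMT → CMT → CMT

/-- `t.isPos p` : the list of moves `p` (`false` = L, `true` = R) from the root
is a valid node (position) of `t`. -/
def CMT.isPos : CMT → List Bool → Prop
  | _, [] => True
  | .leaf, _ :: _ => False
  | .node l _, false :: p => l.isPos p
  | .node _ r, true :: p => r.isPos p

/-- `t.isLeafPos p` : the position `p` is a leaf of `t`. -/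
def CMT.isLeafPos : CMT → List Bool → Prop
  | .leaf, [] => True
  | .node _ _, [] => False
  | .leaf, _ :: _ => False
  | .node l _, false :: p => l.isLeafPos p
  | .node _ r, true :: p => r.isLeafPos p

/-- Number of nodes of a chiral merge tree. -/
def CMT.numNodes : CMT → ℕ
  | .leaf => 1
  | .node l r => l.numNodes + r.numNodes + 1

/-- The sublevel-connected Morse order, compared via path words.  `wle last p q` compares
the path words `p` and `q` after a common prefix whose final letter is `last` (the root's
chirality is `L = false`): if `q` is exhausted (`q` is a prefix of `p`) then `p ≤ q`; at the
first disagreement, `p ≤ q` iff `p`'s letter equals the last common letter. -/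
def wle : Bool → List Bool → List Bool → Prop
  | _, _, [] => True
  | _, [], _ :: _ => False
  | last, x :: p, y :: q => if x = y then wle x p q else x = last

/-- An execution of the merge tree algorithm on the chiral merge tree `t`:
the nodes of `t` are processed in the sublevel-connected Morse order
`s 0 ≤ s 1 ≤ ⋯ ≤ s (n-1)`.  A leaf processed at step `j` creates a new vertex `v_j`
(labelled `j`); an inner node processed at step `j` creates a new edge `e_j`
(labelled `j`) joining a vertex of the component built from its left child to a
vertex of the component built from its right child (the component of a node `x`
consists of the vertices whose leaf positions lie below `x`). -/
structure AlgRun (t : CMT) where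
  /-- the enumeration of the nodes of `t` -/
  s : Fin t.numNodes ≃ {p : List Bool // t.isPos p}
  /-- the enumeration is sorted in the sublevel-connected Morse order -/
  sorted : ∀ i j : Fin t.numNodes, i ≤ j → wle false (s i).1 (s j).1
  /-- first endpoint (a previously created vertex) of the edge created at an inner step -/
  ep1 : Fin t.numNodes → Fin t.numNodes
  /-- second endpoint of the edge created at an inner step -/
  ep2 : Fin t.numNodes → Fin t.numNodes
  ep1_leaf : ∀ j, ¬ t.isLeafPos (s j).1 → t.isLeafPos (s (ep1 j)).1
  ep2_leaf : ∀ j, ¬ t.isLeafPos (s j).1 → t.isLeafPos (s (ep2 j)).1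
  ep1_lt : ∀ j, ¬ t.isLeafPos (s j).1 → ep1 j < j
  ep2_lt : ∀ j, ¬ t.isLeafPos (s j).1 → ep2 j < j
  /-- the first endpoint lies in the component of the left child -/
  ep1_mem : ∀ j, ¬ t.isLeafPos (s j).1 → ((s j).1 ++ [false]) <+: (s (ep1 j)).1
  /-- the second endpoint lies in the component of the right child -/
  ep2_mem : ∀ j, ¬ t.isLeafPos (s j).1 → ((s j).1 ++ [true]) <+: (s (ep2 j)).1

/-- The vertices of the graph produced by the algorithm: the steps at which a leaf
is processed. -/
def AlgVert (t : CMT) (R : AlgRun t) : Type :=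
  {j : Fin t.numNodes // t.isLeafPos (R.s j).1}

/-- The graph produced by the merge tree algorithm. -/
def AlgGraph (t : CMT) (R : AlgRun t) : SimpleGraph (AlgVert t R) where
  Adj u w := u ≠ w ∧ ∃ j : Fin t.numNodes, ¬ t.isLeafPos (R.s j).1 ∧
    ((R.ep1 j = u.1 ∧ R.ep2 j = w.1) ∨ (R.ep1 j = w.1 ∧ R.ep2 j = u.1))
  symm := by
    constructor
    rintro u w ⟨huw, j, hj, h⟩
    exact ⟨huw.symm, j, hj, h.symm⟩
  loopless := by constructor; rintro u ⟨hu, -⟩; exact hu rfl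

/-- The function produced by the merge tree algorithm — each vertex is labelled by the
step at which it was created, and each edge by the (inner) step at which it was added —
is a discrete Morse function on the output graph (weakly increasing, with no two
simplices sharing a value), and every simplex is critical. -/
theorem alg_function_is_discrete_Morse (t : CMT) (R : AlgRun t) :
    ∃ fe : (AlgGraph t R).edgeSet → ℕ,
      -- each edge is labelled by the inner step producing it
      (∀ e : (AlgGraph t R).edgeSet, ∃ j : Fin t.numNodes,
        ¬ t.isLeafPos (R.s j).1 ∧ fe e = j.1 ∧
        ∀ v : AlgVert t R, v ∈ (e : Sym2 (AlgVert t R)) →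
          v.1 = R.ep1 j ∨ v.1 = R.ep2 j) ∧
      -- weakly increasing (indeed strictly on incidences)
      (∀ (v : AlgVert t R) (e : (AlgGraph t R).edgeSet),
        v ∈ (e : Sym2 (AlgVert t R)) → (v.1.1 : ℕ) < fe e) ∧
      -- at most 2-to-1 / all values distinct: every simplex is critical
      (∀ v w : AlgVert t R, (v.1.1 : ℕ) = w.1.1 → v = w) ∧
      (∀ e e' : (AlgGraph t R).edgeSet, fe e = fe e' → e = e') ∧
      (∀ (v : AlgVert t R) (e : (AlgGraph t R).edgeSet), (v.1.1 : ℕ) ≠ fe e) := by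
  classical
  have key : ∀ e : (AlgGraph t R).edgeSet, ∃ j : Fin t.numNodes,
      ∃ h : ¬ t.isLeafPos (R.s j).1,
      (e : Sym2 (AlgVert t R)) =
        s(⟨R.ep1 j, R.ep1_leaf j h⟩, ⟨R.ep2 j, R.ep2_leaf j h⟩) := by
    rintro ⟨e, he⟩
    induction e using Sym2.ind with
    | _ u w =>
      obtain ⟨hne, j, hj, hcase⟩ := he
      refine ⟨j, hj, ?_⟩
      rcases hcase with ⟨h1, h2⟩ | ⟨h1, h2⟩
      · have hu : (⟨R.ep1 j, R.ep1_leaf j hj⟩ : AlgVert t R) = u := Subtype.ext h1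
        have hw : (⟨R.ep2 j, R.ep2_leaf j hj⟩ : AlgVert t R) = w := Subtype.ext h2
        simp [hu, hw]
      · have hu : (⟨R.ep1 j, R.ep1_leaf j hj⟩ : AlgVert t R) = w := Subtype.ext h1
        have hw : (⟨R.ep2 j, R.ep2_leaf j hj⟩ : AlgVert t R) = u := Subtype.ext h2
        simp [hu, hw, Sym2.eq_swap]
  refine ⟨fun e => ((key e).choose : Fin t.numNodes).1, ?_, ?_, ?_, ?_, ?_⟩
  · intro e
    obtain ⟨h, heq⟩ := (key e).choose_spec
    refine ⟨(key e).choose, h, rfl, ?_⟩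
    intro v hv
    rw [heq] at hv
    rcases Sym2.mem_iff.mp hv with hv | hv
    · exact Or.inl (congrArg Subtype.val hv)
    · exact Or.inr (congrArg Subtype.val hv)
  · intro v e hv
    obtain ⟨h, heq⟩ := (key e).choose_spec
    rw [heq] at hv
    rcases Sym2.mem_iff.mp hv with hv | hv
    · have := R.ep1_lt _ h
      have hv1 : v.1 = R.ep1 (key e).choose := congrArg Subtype.val hv
      rw [hv1]; exact this
    · have := R.ep2_lt _ h
      have hv1 : v.1 = R.ep2 (key e).choose := congrArg Subtype.val hv
      rw [hv1]; exact this
  · intro v w hvw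
    exact Subtype.ext (Fin.ext hvw)
  · intro e e' hfe
    obtain ⟨h, heq⟩ := (key e).choose_spec
    obtain ⟨h', heq'⟩ := (key e').choose_spec
    have hj : (key e).choose = (key e').choose := Fin.ext hfe
    apply Subtype.ext
    rw [heq, heq']
    have h1 : R.ep1 (key e).choose = R.ep1 (key e').choose := by rw [hj]
    have h2 : R.ep2 (key e).choose = R.ep2 (key e').choose := by rw [hj]
    congr 1 <;> exact Subtype.ext (by assumption)
  · intro v e hve
    obtain ⟨h, heq⟩ := (key e).choose_spec
    have : v.1 = (key e).choose := Fin.ext hve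
    exact h (this ▸ v.2)
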